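/- Fix n ≥ 2 and work in coordinates [b_1:⋯:b_{n−1}] on the hyperplane T_1. For the radical polynomial x^n + a (i.e., a_1 = ⋯ = a_{n−1} = 0, a_n = a), the second Tschirnhaus form T_{12}(a) equals −2na·Σ_{i=1}^{(n−1)/2} b_i b_{n−i} when n is odd, and −na·(b_{n/2}² + 2Σ_{i=1}^{n/2−1} b_i b_{n−i}) when n is even. -/

import Mathlib

open Finset

private lemma tqr_phi {R : Type*} [CommRing R] (p : ℕ → R) (N : ℕ) {ι : Type*} (s : Finset ι)
    (f : ι → R) (e : ι → ℕ) (he : ∀ i ∈ s, e i < N) :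
    ∑ m ∈ Finset.range N, (∑ i ∈ s, Polynomial.C (f i) * Polynomial.X ^ (e i)).coeff m * p m
      = ∑ i ∈ s, f i * p (e i) := by
  simp_rw [Polynomial.finset_sum_coeff, Finset.sum_mul]
  rw [Finset.sum_comm]
  refine Finset.sum_congr rfl fun i hi => ?_
  simp_rw [Polynomial.coeff_C_mul, Polynomial.coeff_X_pow, mul_ite, mul_one, mul_zero, ite_mul,
    zero_mul]
  rw [Finset.sum_ite_eq' (Finset.range N) (e i) (fun m => f i * p m)]
  simp [he i hi]

private lemma tqr_reflect {R : Type*} [CommRing R] (b : ℕ → R) (n u v : ℕ) (hn : 1 ≤ n)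
    (hv : v ≤ n - 1) (hu : 1 ≤ u) :
    ∑ i ∈ Finset.Icc u v, b i * b (n - i)
      = ∑ i ∈ Finset.Icc (n - v) (n - u), b i * b (n - i) := by
  refine Finset.sum_nbij' (fun i => n - i) (fun i => n - i) ?_ ?_ ?_ ?_ ?_ <;>
      intro i hi <;> simp only [Finset.mem_Icc] at hi ⊢
  · omega
  · omega
  · omega
  · omega
  · have : n - (n - i) = i := by omega
    rw [this, mul_comm]


/-- For the radical polynomial `x^n + a`, whose power sums are `p_m = n·(−a)^{m/n}` when
`n ∣ m` and `0` otherwise, the degree-2 Tschirnhaus form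
`T_2 = Σ_{|κ|=2} (2 choose κ) p_{||κ||} b^κ` restricted to the hyperplane `T_1 = {b_0 = 0}`
equals `−2na·Σ_{i=1}^{(n−1)/2} b_i b_{n−i}` when `n` is odd, and
`−na·(b_{n/2}² + 2 Σ_{i=1}^{n/2−1} b_i b_{n−i})` when `n` is even. -/
theorem tschirnhaus_quadric_radical (R : Type*) [CommRing R] (n : ℕ) (hn : 2 ≤ n)
    (a : R) (b : ℕ → R) (hb0 : b 0 = 0) (p : ℕ → R)
    (hp : ∀ m : ℕ, p m = if n ∣ m then (n : R) * (-a) ^ (m / n) else 0) :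
    (∑ κ ∈ Finset.Nat.antidiagonalTuple n 2,
        (Nat.multinomial Finset.univ κ : R) * p (∑ j : Fin n, (j : ℕ) * κ j) *
          ∏ j : Fin n, b (j : ℕ) ^ κ j) =
      if n % 2 = 1 then
        -2 * (n : R) * a * ∑ i ∈ Finset.Icc 1 ((n - 1) / 2), b i * b (n - i)
      else
        -(n : R) * a * (b (n / 2) ^ 2 + 2 * ∑ i ∈ Finset.Icc 1 (n / 2 - 1), b i * b (n - i)) := by
  classical
  set q : Polynomial R := ∑ j : Fin n, Polynomial.C (b (j : ℕ)) * Polynomial.X ^ (j : ℕ) with hq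
  -- the antidiagonalTuple set equals piAntidiag
  have hset : Finset.Nat.antidiagonalTuple n 2
      = Finset.piAntidiag (Finset.univ : Finset (Fin n)) 2 := by
    ext κ
    simp [Finset.Nat.mem_antidiagonalTuple, Finset.mem_piAntidiag]
  -- representation 1 of q^2 (multinomial theorem)
  have hrep1 : q ^ 2 = ∑ κ ∈ Finset.Nat.antidiagonalTuple n 2,
      Polynomial.C ((Nat.multinomial Finset.univ κ : R) * ∏ j : Fin n, b (j : ℕ) ^ κ j) *
        Polynomial.X ^ (∑ j : Fin n, (j : ℕ) * κ j) := by
    rw [hset, hq, Finset.sum_pow_eq_sum_piAntidiag]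
    refine Finset.sum_congr rfl fun κ hκ => ?_
    simp_rw [mul_pow, Finset.prod_mul_distrib, ← pow_mul, Finset.prod_pow_eq_pow_sum,
      ← Polynomial.C_pow, ← map_prod, map_mul, Polynomial.C_eq_natCast, mul_assoc]
  have hdeg1 : ∀ κ ∈ Finset.Nat.antidiagonalTuple n 2, (∑ j : Fin n, (j : ℕ) * κ j) < 2 * n := by
    intro κ hκ
    rw [Finset.Nat.mem_antidiagonalTuple] at hκ
    calc (∑ j : Fin n, (j : ℕ) * κ j) ≤ ∑ j : Fin n, (n - 1) * κ j :=
          Finset.sum_le_sum fun j _ => Nat.mul_le_mul_right _ (by have := j.isLt; omega)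
      _ = (n - 1) * 2 := by rw [← Finset.mul_sum, hκ]
      _ < 2 * n := by omega
  have h1 : ∑ m ∈ Finset.range (2 * n), (q ^ 2).coeff m * p m
      = ∑ κ ∈ Finset.Nat.antidiagonalTuple n 2,
          (Nat.multinomial Finset.univ κ : R) * p (∑ j : Fin n, (j : ℕ) * κ j) *
            ∏ j : Fin n, b (j : ℕ) ^ κ j := by
    rw [hrep1, tqr_phi p (2 * n) _ _ _ hdeg1]
    exact Finset.sum_congr rfl fun κ hκ => by ring
  -- representation 2 of q^2 (naive expansion)
  have hrep2 : q ^ 2 = ∑ ij ∈ (Finset.univ ×ˢ Finset.univ : Finset (Fin n × Fin n)),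
      Polynomial.C (b (ij.1 : ℕ) * b (ij.2 : ℕ)) * Polynomial.X ^ ((ij.1 : ℕ) + (ij.2 : ℕ)) := by
    rw [sq, hq, Finset.sum_mul_sum, Finset.sum_product]
    refine Finset.sum_congr rfl fun i _ => Finset.sum_congr rfl fun j _ => ?_
    rw [map_mul, pow_add]
    ring
  have hdeg2 : ∀ ij ∈ (Finset.univ ×ˢ Finset.univ : Finset (Fin n × Fin n)),
      ((ij.1 : ℕ) + (ij.2 : ℕ)) < 2 * n := by
    intro ij _
    have := ij.1.isLt; have := ij.2.isLt; omega
  have h2 : ∑ m ∈ Finset.range (2 * n), (q ^ 2).coeff m * p m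
      = ∑ ij ∈ (Finset.univ ×ˢ Finset.univ : Finset (Fin n × Fin n)),
          b (ij.1 : ℕ) * b (ij.2 : ℕ) * p ((ij.1 : ℕ) + (ij.2 : ℕ)) := by
    rw [hrep2, tqr_phi p (2 * n) _ _ _ hdeg2]
  -- rewrite as iterated sum over ranges
  have h3 : ∑ ij ∈ (Finset.univ ×ˢ Finset.univ : Finset (Fin n × Fin n)),
        b (ij.1 : ℕ) * b (ij.2 : ℕ) * p ((ij.1 : ℕ) + (ij.2 : ℕ))
      = ∑ i ∈ Finset.range n, ∑ j ∈ Finset.range n, b i * b j * p (i + j) := by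
    rw [Finset.sum_product]
    rw [← Fin.sum_univ_eq_sum_range (fun i => ∑ j ∈ Finset.range n, b i * b j * p (i + j)) n]
    refine Finset.sum_congr rfl fun i _ => ?_
    exact (Fin.sum_univ_eq_sum_range (fun j => b (i : ℕ) * b j * p ((i : ℕ) + j)) n)
  -- evaluate the inner sum
  have hinner : ∀ i ∈ Finset.range n, (∑ j ∈ Finset.range n, b i * b j * p (i + j))
      = if i = 0 then 0 else (n : R) * (-a) * (b i * b (n - i)) := by
    intro i hi
    rw [Finset.mem_range] at hi
    by_cases h0 : i = 0
    · simp [h0, hb0]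
    · rw [if_neg h0]
      rw [Finset.sum_eq_single_of_mem (n - i) (by rw [Finset.mem_range]; omega)]
      · have hdvd : n ∣ i + (n - i) := by
          have h : i + (n - i) = n := by omega
          rw [h]
        rw [hp, if_pos hdvd]
        have hin : (i + (n - i)) / n = 1 := by
          have h : i + (n - i) = n := by omega
          rw [h, Nat.div_self (by omega)]
        rw [hin, pow_one]
        ring
      · intro j hj hne
        rw [Finset.mem_range] at hj
        rw [hp, if_neg, mul_zero]
        rintro ⟨c, hc⟩
        have hc2 : c ≤ 1 := by
          by_contra hcg
          have : n * 2 ≤ n * c := Nat.mul_le_mul_left n (by omega)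
          omega
        interval_cases c <;> omega
  have houter : (∑ i ∈ Finset.range n, ∑ j ∈ Finset.range n, b i * b j * p (i + j))
      = (n : R) * (-a) * ∑ i ∈ Finset.Icc 1 (n - 1), b i * b (n - i) := by
    rw [Finset.sum_congr rfl hinner, Finset.mul_sum, Finset.range_eq_Ico,
      Finset.sum_eq_sum_Ico_succ_bot (by omega : 0 < n), if_pos rfl, zero_add]
    have hIcc : Finset.Ico 1 n = Finset.Icc 1 (n - 1) := by
      rw [← Finset.Ico_add_one_right_eq_Icc]
      congr 1
      omega
    rw [hIcc]
    exact Finset.sum_congr rfl fun i hi => by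
      rw [Finset.mem_Icc] at hi; rw [if_neg (by omega)]
  -- fold the sum by the symmetry i ↦ n - i
  have hodd : n % 2 = 1 → (∑ i ∈ Finset.Icc 1 (n - 1), b i * b (n - i))
      = 2 * ∑ i ∈ Finset.Icc 1 ((n - 1) / 2), b i * b (n - i) := by
    intro hpar
    set k := (n - 1) / 2 with hk
    have hnk : n = 2 * k + 1 := by omega
    rw [show Finset.Icc 1 (n - 1) = Finset.Ioc 0 (2 * k) from by
      rw [← Finset.Icc_add_one_left_eq_Ioc]; congr 1; omega]
    rw [← Finset.sum_Ioc_consecutive _ (by omega : 0 ≤ k) (by omega : k ≤ 2 * k)]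
    rw [show Finset.Ioc 0 k = Finset.Icc 1 k from (Finset.Icc_add_one_left_eq_Ioc 0 k).symm]
    rw [show Finset.Ioc k (2 * k) = Finset.Icc (k + 1) (2 * k) from
      (Finset.Icc_add_one_left_eq_Ioc k (2 * k)).symm]
    rw [tqr_reflect b n (k + 1) (2 * k) (by omega) (by omega) (by omega)]
    rw [show n - 2 * k = 1 from by omega, show n - (k + 1) = k from by omega]
    ring
  have heven : n % 2 = 0 → (∑ i ∈ Finset.Icc 1 (n - 1), b i * b (n - i))
      = b (n / 2) ^ 2 + 2 * ∑ i ∈ Finset.Icc 1 (n / 2 - 1), b i * b (n - i) := by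
    intro hpar
    set k := n / 2 with hk
    have hnk : n = 2 * k := by omega
    have hk1 : 1 ≤ k := by omega
    rw [show Finset.Icc 1 (n - 1) = Finset.Ioc 0 (2 * k - 1) from by
      rw [← Finset.Icc_add_one_left_eq_Ioc]; congr 1; omega]
    rw [← Finset.sum_Ioc_consecutive _ (by omega : 0 ≤ k) (by omega : k ≤ 2 * k - 1)]
    rw [← Finset.sum_Ioc_consecutive _ (by omega : 0 ≤ k - 1) (by omega : k - 1 ≤ k)]
    rw [show Finset.Ioc (k - 1) k = {k} from by
      ext x; simp only [Finset.mem_Ioc, Finset.mem_singleton]; omega]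
    rw [Finset.sum_singleton, show n - k = k from by omega]
    rw [show Finset.Ioc 0 (k - 1) = Finset.Icc 1 (k - 1) from (Finset.Icc_add_one_left_eq_Ioc 0 (k - 1)).symm]
    rw [show Finset.Ioc k (2 * k - 1) = Finset.Icc (k + 1) (2 * k - 1) from
      (Finset.Icc_add_one_left_eq_Ioc k (2 * k - 1)).symm]
    rw [tqr_reflect b n (k + 1) (2 * k - 1) (by omega) (by omega) (by omega)]
    rw [show n - (2 * k - 1) = 1 from by omega, show n - (k + 1) = k - 1 from by omega]
    ring
  rw [← h1, h2, h3, houter]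
  by_cases hpar : n % 2 = 1
  · rw [if_pos hpar, hodd hpar]
    ring
  · rw [if_neg hpar, heven (by omega)]
    ring
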